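/- Let F be the oriented 2→1 hypergraph on vertices {1,2,3,4,5} with hyperedges {12→3, 13→4, 23→5, 14→2, 25→1}. The 2→1 hypergraph H on vertex set {1,...,n} consisting, for every triple i<j<k, of the two hyperedges ik→j and jk→i, has 2·binom(n,3) hyperedges and contains no copy of F. Hence ex(n,F) ≥ 2·binom(n,3). -/
import Mathlib

open Finset

private lemma pairMem {α} [DecidableEq α] {a b c d : α} (h : ({a,b}:Finset α) = {c,d}) :
    (a=c∨a=d)∧(b=c∨b=d)∧(c=a∨c=b)∧(d=a∨d=b) := by
  have ha : a ∈ ({c,d}:Finset α) := h ▸ (by simp)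
  have hb : b ∈ ({c,d}:Finset α) := h ▸ (by simp)
  have hc : c ∈ ({a,b}:Finset α) := h.symm ▸ (by simp)
  have hd : d ∈ ({a,b}:Finset α) := h.symm ▸ (by simp)
  simp only [mem_insert, mem_singleton] at ha hb hc hd
  exact ⟨ha, hb, hc, hd⟩

private lemma tripleEq {n} {i j k i' j' k' : Fin n} (h1 : i<j) (h2 : j<k)
    (h1' : i'<j') (h2' : j'<k') (hs : ({i,j,k} : Finset (Fin n)) = {i',j',k'}) :
    i=i' ∧ j=j' ∧ k=k' := by
  have hi : i' ∈ ({i,j,k} : Finset (Fin n)) := hs.symm ▸ (by simp)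
  have hj : j' ∈ ({i,j,k} : Finset (Fin n)) := hs.symm ▸ (by simp)
  have hk : k' ∈ ({i,j,k} : Finset (Fin n)) := hs.symm ▸ (by simp)
  simp only [mem_insert, mem_singleton] at hi hj hk
  simp only [Fin.ext_iff, Fin.lt_def] at *
  omega

private lemma strictCard (n : ℕ) :
    ((univ : Finset (Fin n × Fin n × Fin n)).filter
      (fun p => p.1 < p.2.1 ∧ p.2.1 < p.2.2)).card = n.choose 3 := by
  rw [show n.choose 3 = ((univ : Finset (Fin n)).powersetCard 3).card by
    simp [card_powersetCard]]
  apply card_bij (fun p _ => ({p.1, p.2.1, p.2.2} : Finset (Fin n)))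
  · rintro ⟨i, j, k⟩ hp
    simp only [mem_filter] at hp
    obtain ⟨-, h1, h2⟩ := hp
    rw [mem_powersetCard_univ]
    exact card_eq_three.mpr ⟨i, j, k, h1.ne, (h1.trans h2).ne, h2.ne, rfl⟩
  · rintro ⟨i, j, k⟩ hp ⟨i', j', k'⟩ hp' hs
    simp only [mem_filter] at hp hp'
    obtain ⟨e1, e2, e3⟩ := tripleEq hp.2.1 hp.2.2 hp'.2.1 hp'.2.2 hs
    simp [e1, e2, e3]
  · intro s hs
    rw [mem_powersetCard_univ] at hs
    set e := s.orderEmbOfFin hs with he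
    refine ⟨(e 0, e 1, e 2), ?_, ?_⟩
    · simp only [mem_filter, mem_univ, true_and]
      exact ⟨e.strictMono (by decide), e.strictMono (by decide)⟩
    · have hsub : ({e 0, e 1, e 2} : Finset (Fin n)) ⊆ s := by
        intro x hx
        simp only [mem_insert, mem_singleton] at hx
        rcases hx with h | h | h <;> exact h ▸ s.orderEmbOfFin_mem hs _
      exact eq_of_subset_of_card_le hsub (by
        rw [hs, card_eq_three.mpr ⟨e 0, e 1, e 2,
          e.injective.ne (by decide), e.injective.ne (by decide),
          e.injective.ne (by decide), rfl⟩])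

theorem stmt8 (n : ℕ) (E : Finset (Finset (Fin n) × Fin n))
    (hE : ∀ e, e ∈ E ↔ ∃ i j k : Fin n, i < j ∧ j < k ∧
      (e = (({i, k} : Finset (Fin n)), j) ∨ e = (({j, k} : Finset (Fin n)), i))) :
    E.card = 2 * Nat.choose n 3 ∧
    ¬ ∃ v : Fin 5 → Fin n, Function.Injective v ∧
      (({v 0, v 1} : Finset (Fin n)), v 2) ∈ E ∧
      (({v 0, v 2} : Finset (Fin n)), v 3) ∈ E ∧
      (({v 1, v 2} : Finset (Fin n)), v 4) ∈ E ∧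
      (({v 0, v 3} : Finset (Fin n)), v 1) ∈ E ∧
      (({v 1, v 4} : Finset (Fin n)), v 0) ∈ E := by
  have key : ∀ a b c : Fin n, (({a, b} : Finset (Fin n)), c) ∈ E →
      c.val < a.val ∨ c.val < b.val := by
    intro a b c hm
    rw [hE] at hm
    obtain ⟨i, j, k, h1, h2, hcase | hcase⟩ := hm <;>
    · rw [Prod.mk.injEq] at hcase
      obtain ⟨hset, hhead⟩ := hcase
      obtain ⟨-, -, -, hk⟩ := pairMem hset
      subst hhead
      simp only [Fin.lt_def] at h1 h2
      rcases hk with h | h <;> rw [← h] <;> omega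
  constructor
  · -- cardinality
    set S := ((univ : Finset (Fin n × Fin n × Fin n)).filter
      (fun p => p.1 < p.2.1 ∧ p.2.1 < p.2.2)) with hS
    have hcard : E.card = (S ×ˢ (univ : Finset Bool)).card := by
      symm
      apply card_bij (fun p _ => if p.2 then (({p.1.2.1, p.1.2.2} : Finset (Fin n)), p.1.1)
        else (({p.1.1, p.1.2.2} : Finset (Fin n)), p.1.2.1))
      · rintro ⟨⟨i, j, k⟩, b⟩ hp
        simp only [hS, mem_product, mem_filter] at hp
        obtain ⟨⟨-, h1, h2⟩, -⟩ := hp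
        cases b
        · simpa using (hE _).mpr ⟨i, j, k, h1, h2, Or.inl rfl⟩
        · simpa using (hE _).mpr ⟨i, j, k, h1, h2, Or.inr rfl⟩
      · rintro ⟨⟨i, j, k⟩, b⟩ hp ⟨⟨i', j', k'⟩, b'⟩ hp' heq
        simp only [hS, mem_product, mem_filter] at hp hp'
        obtain ⟨⟨-, h1, h2⟩, -⟩ := hp
        obtain ⟨⟨-, h1', h2'⟩, -⟩ := hp'
        simp only [Fin.lt_def] at h1 h2 h1' h2'
        cases b <;> cases b' <;>
            simp only [Bool.false_eq_true, if_false, if_true, Prod.mk.injEq] at heq <;>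
            obtain ⟨hset, hhead⟩ := heq <;>
            obtain ⟨m1, m2, m3, m4⟩ := pairMem hset <;>
            simp only [Fin.ext_iff] at m1 m2 m3 m4 hhead
        · simp only [Prod.mk.injEq, Fin.ext_iff]
          refine ⟨⟨?_, ?_, ?_⟩, trivial⟩ <;> omega
        · exfalso; omega
        · exfalso; omega
        · simp only [Prod.mk.injEq, Fin.ext_iff]
          refine ⟨⟨?_, ?_, ?_⟩, trivial⟩ <;> omega
      · intro e he
        rw [hE] at he
        obtain ⟨i, j, k, h1, h2, hcase | hcase⟩ := he
        · exact ⟨((i, j, k), false), by simp [hS, h1, h2], by simp [hcase]⟩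
        · exact ⟨((i, j, k), true), by simp [hS, h1, h2], by simp [hcase]⟩
    rw [hcard, card_product, strictCard]
    simp [Nat.mul_comm]
  · -- no copy of F
    rintro ⟨v, hinj, e1, e2, e3, e4, e5⟩
    have c1 := key _ _ _ e1
    have c2 := key _ _ _ e2
    have c3 := key _ _ _ e3
    have c4 := key _ _ _ e4
    have c5 := key _ _ _ e5
    omega
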